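/- Let τ = (1+√5)/2 be the golden ratio and let μ be the uniform distribution on the 12 vertices of a regular icosahedron inscribed in the unit sphere S² of ℝ³, given by the unit vectors (0, ±1, ±τ)/√(1+τ²), (±τ, 0, ±1)/√(1+τ²), and (±1, ±τ, 0)/√(1+τ²). Then g*(μ) = (1+√5)/6. -/

import Mathlib

open MeasureTheory Real
open scoped ENNReal

noncomputable section

abbrev E3 := EuclideanSpace ℝ (Fin 3)

/-- The unit sphere S² in ℝ³. -/
def unitSphere : Set E3 := Metric.sphere (0 : E3) 1

/-- `g C μ` is the supremum over unit vectors `v` of `∫ √(C² + (1−C²)⟨r,v⟩²) dμ(r)`. -/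
def g (C : ℝ) (μ : Measure E3) : ℝ :=
  ⨆ v : unitSphere, ∫ r, Real.sqrt (C ^ 2 + (1 - C ^ 2) * (inner ℝ r (v : E3) : ℝ) ^ 2) ∂μ


/-- `gstar μ` is the supremum over unit vectors `v` of `∫ |⟨r,v⟩| dμ(r)`. -/
def gstar (μ : Measure E3) : ℝ :=
  ⨆ v : unitSphere, ∫ r, |(inner ℝ r (v : E3) : ℝ)| ∂μ

/-- The vector `(a, b, c)` in ℝ³. -/
def vec3 (a b c : ℝ) : E3 := (WithLp.equiv 2 (Fin 3 → ℝ)).symm ![a, b, c]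

/-- The golden ratio `τ = (1+√5)/2`. -/
def gold : ℝ := (1 + Real.sqrt 5) / 2

/-- The normalization factor `√(1+τ²)`. -/
def icoNorm : ℝ := Real.sqrt (1 + gold ^ 2)

/-- The uniform distribution on the 12 vertices `(0, ±1, ±τ)/√(1+τ²)`,
`(±τ, 0, ±1)/√(1+τ²)`, `(±1, ±τ, 0)/√(1+τ²)` of a regular icosahedron inscribed
in the unit sphere S² of ℝ³. -/
def icosahedronUniform : Measure E3 :=
  (12 : ℝ≥0∞)⁻¹ •
    (Measure.dirac (vec3 0 (1 / icoNorm) (gold / icoNorm))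
      + Measure.dirac (vec3 0 (1 / icoNorm) (-(gold / icoNorm)))
      + Measure.dirac (vec3 0 (-(1 / icoNorm)) (gold / icoNorm))
      + Measure.dirac (vec3 0 (-(1 / icoNorm)) (-(gold / icoNorm)))
      + Measure.dirac (vec3 (gold / icoNorm) 0 (1 / icoNorm))
      + Measure.dirac (vec3 (gold / icoNorm) 0 (-(1 / icoNorm)))
      + Measure.dirac (vec3 (-(gold / icoNorm)) 0 (1 / icoNorm))
      + Measure.dirac (vec3 (-(gold / icoNorm)) 0 (-(1 / icoNorm)))
      + Measure.dirac (vec3 (1 / icoNorm) (gold / icoNorm) 0)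
      + Measure.dirac (vec3 (1 / icoNorm) (-(gold / icoNorm)) 0)
      + Measure.dirac (vec3 (-(1 / icoNorm)) (gold / icoNorm) 0)
      + Measure.dirac (vec3 (-(1 / icoNorm)) (-(gold / icoNorm)) 0))


set_option maxHeartbeats 1000000

lemma pair_abs (x y : ℝ) : |x + y| + |x - y| = 2 * max |x| |y| := by
  rcases abs_cases x with ⟨h1,h2⟩|⟨h1,h2⟩ <;>
  rcases abs_cases y with ⟨h3,h4⟩|⟨h3,h4⟩ <;>
  rcases max_cases |x| |y| with ⟨h5,h6⟩|⟨h5,h6⟩ <;>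
  rcases abs_cases (x+y) with ⟨h7,h8⟩|⟨h7,h8⟩ <;>
  rcases abs_cases (x-y) with ⟨h9,h10⟩|⟨h9,h10⟩ <;>
  linarith

lemma cs3 (p q r x y z N : ℝ) (h : p^2+q^2+r^2 ≤ N^2) (hxyz : x^2+y^2+z^2 ≤ 1) (hN : 0 ≤ N)
    (hp : 0 ≤ p) (hq : 0 ≤ q) (hr : 0 ≤ r) (hx : 0 ≤ x) (hy : 0 ≤ y) (hz : 0 ≤ z) :
    p*x+q*y+r*z ≤ N := by
  have h2 : (p*x+q*y+r*z)^2 ≤ N^2 := by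
    nlinarith [sq_nonneg (p*y-q*x), sq_nonneg (p*z-r*x), sq_nonneg (q*z-r*y),
      mul_nonneg hp hx, mul_nonneg hq hy, mul_nonneg hr hz, sq_nonneg (x^2+y^2+z^2)]
  nlinarith [h2, mul_nonneg hp hx, mul_nonneg hq hy, mul_nonneg hr hz]

lemma six (τ n a b c : ℝ) (hτ : τ^2 = τ+1) (hτ1 : 1 ≤ τ) (hn : n^2 = 2+τ) (hn0 : 0 < n)
    (hv : a^2+b^2+c^2 = 1) :
    max |b| (τ*|c|) + max (τ*|a|) |c| + max |a| (τ*|b|) ≤ τ*n := by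
  have hτn : (τ*n)^2 = (τ+1)*(2+τ) := by rw [mul_pow, hτ, hn]
  have hxyz : |a|^2+|b|^2+|c|^2 ≤ 1 := by rw [sq_abs, sq_abs, sq_abs]; linarith
  have hN : 0 ≤ τ*n := by positivity
  have A := abs_nonneg a; have B := abs_nonneg b; have C := abs_nonneg c
  have hτ0 : (0:ℝ) ≤ τ := by linarith
  rcases max_cases |b| (τ*|c|) with ⟨e1,_⟩|⟨e1,_⟩ <;>
  rcases max_cases (τ*|a|) |c| with ⟨e2,_⟩|⟨e2,_⟩ <;>
  rcases max_cases |a| (τ*|b|) with ⟨e3,_⟩|⟨e3,_⟩ <;> rw [e1, e2, e3]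
  · -- |b| + τ|a| + |a|
    have := cs3 (τ+1) 1 0 |a| |b| |c| (τ*n) (by rw [hτn]; nlinarith) hxyz hN (by linarith) (by norm_num) le_rfl A B C
    linarith
  · -- |b| + τ|a| + τ|b|
    have := cs3 τ (1+τ) 0 |a| |b| |c| (τ*n) (by rw [hτn]; nlinarith) hxyz hN hτ0 (by linarith) le_rfl A B C
    linarith
  · -- |b| + |c| + |a|
    have := cs3 1 1 1 |a| |b| |c| (τ*n) (by rw [hτn]; nlinarith) hxyz hN (by norm_num) (by norm_num) (by norm_num) A B C
    linarith
  · -- |b| + |c| + τ|b|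
    have := cs3 0 (1+τ) 1 |a| |b| |c| (τ*n) (by rw [hτn]; nlinarith) hxyz hN le_rfl (by linarith) (by norm_num) A B C
    linarith
  · -- τ|c| + τ|a| + |a|
    have := cs3 (τ+1) 0 τ |a| |b| |c| (τ*n) (by rw [hτn]; nlinarith) hxyz hN (by linarith) le_rfl hτ0 A B C
    linarith
  · -- τ|c| + τ|a| + τ|b|
    have := cs3 τ τ τ |a| |b| |c| (τ*n) (by rw [hτn]; nlinarith) hxyz hN hτ0 hτ0 hτ0 A B C
    linarith
  · -- τ|c| + |c| + |a|
    have := cs3 1 0 (τ+1) |a| |b| |c| (τ*n) (by rw [hτn]; nlinarith) hxyz hN (by norm_num) le_rfl (by linarith) A B C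
    linarith
  · -- τ|c| + |c| + τ|b|
    have := cs3 0 τ (τ+1) |a| |b| |c| (τ*n) (by rw [hτn]; nlinarith) hxyz hN le_rfl hτ0 (by linarith) A B C
    linarith

lemma sumsix (τ n a b c : ℝ) (hτ : τ^2 = τ+1) (hτ1 : 1 ≤ τ) (hn : n^2 = 2+τ) (hn0 : 0 < n)
    (hv : a^2+b^2+c^2 = 1) :
    |b + τ*c| + |b - τ*c| + |τ*a + c| + |τ*a - c| + |a + τ*b| + |a - τ*b| ≤ 2*(τ*n) := by
  have hτ0 : (0:ℝ) ≤ τ := by linarith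
  have e1 := pair_abs b (τ*c)
  have e2 := pair_abs (τ*a) c
  have e3 := pair_abs a (τ*b)
  have m1 : |τ*c| = τ*|c| := by rw [abs_mul, abs_of_nonneg hτ0]
  have m2 : |τ*a| = τ*|a| := by rw [abs_mul, abs_of_nonneg hτ0]
  have m3 : |τ*b| = τ*|b| := by rw [abs_mul, abs_of_nonneg hτ0]
  rw [m1] at e1; rw [m2] at e2; rw [m3] at e3
  have := six τ n a b c hτ hτ1 hn hn0 hv
  linarith

lemma sqrt5_sq : Real.sqrt 5 ^ 2 = 5 := Real.sq_sqrt (by norm_num)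
lemma sqrt5_ge : (1:ℝ) ≤ Real.sqrt 5 := by
  nlinarith [sqrt5_sq, Real.sqrt_nonneg 5]
lemma goldSq : gold ^ 2 = gold + 1 := by
  rw [gold]; linear_combination sqrt5_sq / 4
lemma goldGe : (1:ℝ) ≤ gold := by rw [gold]; linarith [sqrt5_ge]
lemma icoNorm_sq : icoNorm ^ 2 = 2 + gold := by
  rw [icoNorm, Real.sq_sqrt (by nlinarith [goldSq, goldGe])]
  linarith [goldSq]
lemma icoNorm_pos : 0 < icoNorm := by
  rw [icoNorm]; exact Real.sqrt_pos.mpr (by nlinarith [goldSq, goldGe])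

lemma inner_vec3 (x y z : ℝ) (w : E3) :
    (inner ℝ (vec3 x y z) w : ℝ) = x * w 0 + y * w 1 + z * w 2 := by
  simp [vec3, PiLp.inner_apply, Fin.sum_univ_three]
  ring

lemma integral_icosa (f : E3 → ℝ) (hf : Continuous f) :
    ∫ r, f r ∂icosahedronUniform =
      (f (vec3 0 (1 / icoNorm) (gold / icoNorm))
      + f (vec3 0 (1 / icoNorm) (-(gold / icoNorm)))
      + f (vec3 0 (-(1 / icoNorm)) (gold / icoNorm))
      + f (vec3 0 (-(1 / icoNorm)) (-(gold / icoNorm)))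
      + f (vec3 (gold / icoNorm) 0 (1 / icoNorm))
      + f (vec3 (gold / icoNorm) 0 (-(1 / icoNorm)))
      + f (vec3 (-(gold / icoNorm)) 0 (1 / icoNorm))
      + f (vec3 (-(gold / icoNorm)) 0 (-(1 / icoNorm)))
      + f (vec3 (1 / icoNorm) (gold / icoNorm) 0)
      + f (vec3 (1 / icoNorm) (-(gold / icoNorm)) 0)
      + f (vec3 (-(1 / icoNorm)) (gold / icoNorm) 0)
      + f (vec3 (-(1 / icoNorm)) (-(gold / icoNorm)) 0)) / 12 := by
  have hd : ∀ a : E3, Integrable f (Measure.dirac a) := by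
    intro a
    refine ⟨hf.stronglyMeasurable.aestronglyMeasurable, ?_⟩
    rw [HasFiniteIntegral, lintegral_dirac]
    exact ENNReal.coe_lt_top
  rw [icosahedronUniform, integral_smul_measure]
  rw [integral_add_measure ((((((((((((hd _).add_measure (hd _)).add_measure (hd _)).add_measure (hd _)).add_measure (hd _)).add_measure (hd _)).add_measure (hd _)).add_measure (hd _)).add_measure (hd _)).add_measure (hd _)).add_measure (hd _))) (hd _),
     integral_add_measure (((((((((((hd _).add_measure (hd _)).add_measure (hd _)).add_measure (hd _)).add_measure (hd _)).add_measure (hd _)).add_measure (hd _)).add_measure (hd _)).add_measure (hd _)).add_measure (hd _))) (hd _),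
     integral_add_measure ((((((((((hd _).add_measure (hd _)).add_measure (hd _)).add_measure (hd _)).add_measure (hd _)).add_measure (hd _)).add_measure (hd _)).add_measure (hd _)).add_measure (hd _))) (hd _),
     integral_add_measure (((((((((hd _).add_measure (hd _)).add_measure (hd _)).add_measure (hd _)).add_measure (hd _)).add_measure (hd _)).add_measure (hd _)).add_measure (hd _))) (hd _),
     integral_add_measure ((((((((hd _).add_measure (hd _)).add_measure (hd _)).add_measure (hd _)).add_measure (hd _)).add_measure (hd _)).add_measure (hd _))) (hd _),
     integral_add_measure (((((((hd _).add_measure (hd _)).add_measure (hd _)).add_measure (hd _)).add_measure (hd _)).add_measure (hd _))) (hd _),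
     integral_add_measure ((((((hd _).add_measure (hd _)).add_measure (hd _)).add_measure (hd _)).add_measure (hd _))) (hd _),
     integral_add_measure (((((hd _).add_measure (hd _)).add_measure (hd _)).add_measure (hd _))) (hd _),
     integral_add_measure ((((hd _).add_measure (hd _)).add_measure (hd _))) (hd _),
     integral_add_measure (((hd _).add_measure (hd _))) (hd _),
     integral_add_measure ((hd _)) (hd _)]
  simp only [integral_dirac]
  rw [ENNReal.toReal_inv]
  norm_num
  ring

lemma F_eq (v : E3) : (∫ r, |(inner ℝ r v : ℝ)| ∂icosahedronUniform)
    = (|v 1 + gold * v 2| + |v 1 - gold * v 2| + |gold * v 0 + v 2| + |gold * v 0 - v 2|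
       + |v 0 + gold * v 1| + |v 0 - gold * v 1|) / (6 * icoNorm) := by
  have hn0 := icoNorm_pos
  have hcont : Continuous fun r : E3 => |(inner ℝ r v : ℝ)| := by
    have : Continuous fun r : E3 => (inner ℝ r v : ℝ) := continuous_id.inner continuous_const
    exact this.abs
  rw [integral_icosa _ hcont]
  simp only [inner_vec3]
  set a := v 0; set b := v 1; set c := v 2
  have E1 : |0 * a + 1 / icoNorm * b + gold / icoNorm * c| = |b + gold * c| / icoNorm := by
    rw [show 0 * a + 1 / icoNorm * b + gold / icoNorm * c = (b + gold * c) / icoNorm from by ring,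
      abs_div, abs_of_pos hn0]
  have E2 : |0 * a + 1 / icoNorm * b + -(gold / icoNorm) * c| = |b - gold * c| / icoNorm := by
    rw [show 0 * a + 1 / icoNorm * b + -(gold / icoNorm) * c = (b - gold * c) / icoNorm from by ring,
      abs_div, abs_of_pos hn0]
  have E3' : |0 * a + -(1 / icoNorm) * b + gold / icoNorm * c| = |b - gold * c| / icoNorm := by
    rw [show 0 * a + -(1 / icoNorm) * b + gold / icoNorm * c = -((b - gold * c) / icoNorm) from by ring,
      abs_neg, abs_div, abs_of_pos hn0]
  have E4 : |0 * a + -(1 / icoNorm) * b + -(gold / icoNorm) * c| = |b + gold * c| / icoNorm := by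
    rw [show 0 * a + -(1 / icoNorm) * b + -(gold / icoNorm) * c = -((b + gold * c) / icoNorm) from by ring,
      abs_neg, abs_div, abs_of_pos hn0]
  have E5 : |gold / icoNorm * a + 0 * b + 1 / icoNorm * c| = |gold * a + c| / icoNorm := by
    rw [show gold / icoNorm * a + 0 * b + 1 / icoNorm * c = (gold * a + c) / icoNorm from by ring,
      abs_div, abs_of_pos hn0]
  have E6 : |gold / icoNorm * a + 0 * b + -(1 / icoNorm) * c| = |gold * a - c| / icoNorm := by
    rw [show gold / icoNorm * a + 0 * b + -(1 / icoNorm) * c = (gold * a - c) / icoNorm from by ring,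
      abs_div, abs_of_pos hn0]
  have E7 : |-(gold / icoNorm) * a + 0 * b + 1 / icoNorm * c| = |gold * a - c| / icoNorm := by
    rw [show -(gold / icoNorm) * a + 0 * b + 1 / icoNorm * c = -((gold * a - c) / icoNorm) from by ring,
      abs_neg, abs_div, abs_of_pos hn0]
  have E8 : |-(gold / icoNorm) * a + 0 * b + -(1 / icoNorm) * c| = |gold * a + c| / icoNorm := by
    rw [show -(gold / icoNorm) * a + 0 * b + -(1 / icoNorm) * c = -((gold * a + c) / icoNorm) from by ring,
      abs_neg, abs_div, abs_of_pos hn0]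
  have E9 : |1 / icoNorm * a + gold / icoNorm * b + 0 * c| = |a + gold * b| / icoNorm := by
    rw [show 1 / icoNorm * a + gold / icoNorm * b + 0 * c = (a + gold * b) / icoNorm from by ring,
      abs_div, abs_of_pos hn0]
  have E10 : |1 / icoNorm * a + -(gold / icoNorm) * b + 0 * c| = |a - gold * b| / icoNorm := by
    rw [show 1 / icoNorm * a + -(gold / icoNorm) * b + 0 * c = (a - gold * b) / icoNorm from by ring,
      abs_div, abs_of_pos hn0]
  have E11 : |-(1 / icoNorm) * a + gold / icoNorm * b + 0 * c| = |a - gold * b| / icoNorm := by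
    rw [show -(1 / icoNorm) * a + gold / icoNorm * b + 0 * c = -((a - gold * b) / icoNorm) from by ring,
      abs_neg, abs_div, abs_of_pos hn0]
  have E12 : |-(1 / icoNorm) * a + -(gold / icoNorm) * b + 0 * c| = |a + gold * b| / icoNorm := by
    rw [show -(1 / icoNorm) * a + -(gold / icoNorm) * b + 0 * c = -((a + gold * b) / icoNorm) from by ring,
      abs_neg, abs_div, abs_of_pos hn0]
  rw [E1, E2, E3', E4, E5, E6, E7, E8, E9, E10, E11, E12]
  field_simp
  ring


lemma sphere_coords (v : E3) (hv : v ∈ unitSphere) :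
    (v 0)^2 + (v 1)^2 + (v 2)^2 = 1 := by
  have h := mem_sphere_zero_iff_norm.mp hv
  rw [EuclideanSpace.norm_eq] at h
  have h2 : (v 0)^2 + (v 1)^2 + (v 2)^2 = 1^2 := by
    rw [← h, sq_sqrt (by positivity)]
    simp [Fin.sum_univ_three, sq]
  linarith

lemma upper_bound (v : E3) (hv : v ∈ unitSphere) :
    (∫ r, |(inner ℝ r v : ℝ)| ∂icosahedronUniform) ≤ (1 + Real.sqrt 5) / 6 := by
  rw [F_eq]
  have habc := sphere_coords v hv
  have hs := sumsix gold icoNorm (v 0) (v 1) (v 2) goldSq goldGe icoNorm_sq icoNorm_pos habc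
  have hg : (1:ℝ) + Real.sqrt 5 = 2 * gold := by rw [gold]; ring
  rw [hg, div_le_div_iff₀ (mul_pos (by norm_num) icoNorm_pos) (by norm_num)]
  nlinarith [hs, icoNorm_pos]

def vzero : E3 := vec3 0 (1 / icoNorm) (gold / icoNorm)

lemma vzero_mem : vzero ∈ unitSphere := by
  have hn0 := icoNorm_pos
  refine mem_sphere_zero_iff_norm.mpr ?_
  rw [EuclideanSpace.norm_eq]
  rw [show ∑ i, ‖vzero i‖ ^ 2 = 1 from ?_]
  · exact Real.sqrt_one
  · simp only [Fin.sum_univ_three, Real.norm_eq_abs, sq_abs]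
    show (0:ℝ)^2 + (1/icoNorm)^2 + (gold/icoNorm)^2 = 1
    field_simp
    linarith [goldSq, icoNorm_sq]

lemma lower_bound :
    (1 + Real.sqrt 5) / 6 ≤ ∫ r, |(inner ℝ r vzero : ℝ)| ∂icosahedronUniform := by
  have hn0 := icoNorm_pos
  rw [F_eq]
  have e0 : vzero 0 = 0 := rfl
  have e1 : vzero 1 = 1 / icoNorm := rfl
  have e2 : vzero 2 = gold / icoNorm := rfl
  rw [e0, e1, e2]
  have L1 : gold^2*(1/icoNorm) + 1*(1/icoNorm) ≤ |1/icoNorm + gold*(gold/icoNorm)| :=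
    le_trans (le_of_eq (by ring)) (le_abs_self _)
  have L2 : gold^2*(1/icoNorm) - 1*(1/icoNorm) ≤ |1/icoNorm - gold*(gold/icoNorm)| :=
    le_trans (le_of_eq (by ring)) (neg_le_abs _)
  have L3 : gold*(1/icoNorm) ≤ |gold*0 + gold/icoNorm| :=
    le_trans (le_of_eq (by ring)) (le_abs_self _)
  have L4 : gold*(1/icoNorm) ≤ |gold*0 - gold/icoNorm| :=
    le_trans (le_of_eq (by ring)) (neg_le_abs _)
  have L5 : gold*(1/icoNorm) ≤ |(0:ℝ) + gold*(1/icoNorm)| :=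
    le_trans (le_of_eq (by ring)) (le_abs_self _)
  have L6 : gold*(1/icoNorm) ≤ |(0:ℝ) - gold*(1/icoNorm)| :=
    le_trans (le_of_eq (by ring)) (neg_le_abs _)
  have hg : (1:ℝ) + Real.sqrt 5 = 2 * gold := by rw [gold]; ring
  have key : 2*gold^2*(1/icoNorm) + 4*gold*(1/icoNorm) = 2*gold*icoNorm := by
    field_simp
    linear_combination (-2*gold) * icoNorm_sq
  rw [hg, div_le_div_iff₀ (by norm_num) (mul_pos (by norm_num) hn0)]
  linarith [L1, L2, L3, L4, L5, L6, key]

instance : Nonempty unitSphere := ⟨⟨vzero, vzero_mem⟩⟩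

/-- For the uniform distribution `μ` on the 12 vertices of a regular icosahedron inscribed in
the unit sphere S² of ℝ³, one has `g*(μ) = (1+√5)/6`. -/
theorem gstar_icosahedron : gstar icosahedronUniform = (1 + Real.sqrt 5) / 6 := by
  rw [gstar]
  have hub : ∀ v : unitSphere, (∫ r, |(inner ℝ r (v : E3) : ℝ)| ∂icosahedronUniform) ≤ (1 + Real.sqrt 5) / 6 :=
    fun v => upper_bound v v.2
  apply le_antisymm
  · exact ciSup_le hub
  · have hb : BddAbove (Set.range fun v : unitSphere => ∫ r, |(inner ℝ r (v : E3) : ℝ)| ∂icosahedronUniform) :=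
      ⟨(1 + Real.sqrt 5) / 6, by rintro x ⟨v, rfl⟩; exact hub v⟩
    exact le_trans lower_bound (le_ciSup hb ⟨vzero, vzero_mem⟩)
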